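/- arXiv:0803.2771 — 3 statements merged into one kernel-verified Lean document; each statement's English description precedes it below -/
import Mathlib

section
/- Let m be a natural number and let C_{i,j} be positive real numbers given for all indices 0 ≤ j < i ≤ m. Then there exists a positive real number ε with ε < 1/2 such that for any nonnegative real numbers a_0, a_1, ..., a_m, if for every i with 0 ≤ i ≤ m one has a_i ≤ ε·(∑_{j=0}^{m} a_j) + ∑_{0 ≤ j < i} C_{i,j}·a_j, then a_i = 0 for all 0 ≤ i ≤ m. -/
/-- Sublemma (Section 2.3): given positive constants `C i j` for `0 ≤ j < i ≤ m`,
there exists `0 < ε < 1/2` such that for any nonnegative reals `a 0, …, a m`,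
the inequalities `a i ≤ ε • (∑ j ≤ m, a j) + ∑_{j < i} C i j • a j` force all `a i = 0`. -/
theorem sublemma_norm_estimate (m : ℕ) (C : ℕ → ℕ → ℝ)
    (hC : ∀ i j, j < i → i ≤ m → 0 < C i j) :
    ∃ ε : ℝ, 0 < ε ∧ ε < 1 / 2 ∧
      ∀ a : ℕ → ℝ, (∀ i, i ≤ m → 0 ≤ a i) →
        (∀ i, i ≤ m →
          a i ≤ ε * (∑ j ∈ Finset.range (m + 1), a j)
            + ∑ j ∈ Finset.range i, C i j * a j) →
        ∀ i, i ≤ m → a i = 0 := by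
  set D : ℝ := 1 + ∑ i ∈ Finset.range (m + 1), ∑ j ∈ Finset.range (m + 1), |C i j| with hD
  have hD1 : (1 : ℝ) ≤ D := by
    have : 0 ≤ ∑ i ∈ Finset.range (m + 1), ∑ j ∈ Finset.range (m + 1), |C i j| :=
      Finset.sum_nonneg fun i _ => Finset.sum_nonneg fun j _ => abs_nonneg _
    linarith
  have hDpos : (0 : ℝ) < D := by linarith
  have hCD : ∀ i j, j < i → i ≤ m → C i j ≤ D := by
    intro i j hji him
    have hi : i ∈ Finset.range (m + 1) := Finset.mem_range.2 (Nat.lt_succ_of_le him)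
    have hj : j ∈ Finset.range (m + 1) := Finset.mem_range.2
      (Nat.lt_succ_of_le (le_trans (le_of_lt hji) him))
    have h1 : |C i j| ≤ ∑ j ∈ Finset.range (m + 1), |C i j| :=
      Finset.single_le_sum (f := fun k => |C i k|) (fun k _ => abs_nonneg _) hj
    have h2 : ∑ j ∈ Finset.range (m + 1), |C i j|
        ≤ ∑ i ∈ Finset.range (m + 1), ∑ j ∈ Finset.range (m + 1), |C i j| :=
      Finset.single_le_sum (f := fun k => ∑ j ∈ Finset.range (m + 1), |C k j|)
        (fun k _ => Finset.sum_nonneg fun l _ => abs_nonneg _) hi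
    have := le_abs_self (C i j)
    linarith
  have hpow : (0:ℝ) < (1 + D) ^ m := pow_pos (by linarith) m
  set ε : ℝ := min (1/4) (1 / (2 * (m + 1) * (1 + D) ^ m)) with hε
  have hεpos : 0 < ε := by
    apply lt_min (by norm_num)
    positivity
  refine ⟨ε, hεpos, lt_of_le_of_lt (min_le_left _ _) (by norm_num), ?_⟩
  intro a ha h2
  set S : ℝ := ∑ j ∈ Finset.range (m + 1), a j with hS
  have hSnn : 0 ≤ S :=
    Finset.sum_nonneg fun j hj => ha j (Nat.lt_succ_iff.1 (Finset.mem_range.1 hj))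
  have key : ∀ i, i ≤ m → a i ≤ ε * (1 + D) ^ i * S := by
    intro i
    induction i using Nat.strong_induction_on with
    | _ i ih =>
      intro hi
      have step : a i ≤ ε * S + ∑ j ∈ Finset.range i, D * (ε * (1 + D) ^ j * S) := by
        refine le_trans (h2 i hi) (add_le_add_right ?_ _)
        refine Finset.sum_le_sum fun j hj => ?_
        have hji := Finset.mem_range.1 hj
        have hjm : j ≤ m := le_trans (le_of_lt hji) hi
        calc C i j * a j ≤ D * a j :=
              mul_le_mul_of_nonneg_right (hCD i j hji hi) (ha j hjm)
          _ ≤ D * (ε * (1 + D) ^ j * S) := by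
              exact mul_le_mul_of_nonneg_left (ih j hji hjm) (le_of_lt hDpos)
      have hsum : ∑ j ∈ Finset.range i, D * (ε * (1 + D) ^ j * S)
          = ε * S * ((1 + D) ^ i - 1) := by
        have hg : (∑ j ∈ Finset.range i, (1 + D) ^ j) * ((1 + D) - 1)
            = (1 + D) ^ i - 1 := geom_sum_mul (1 + D) i
        calc ∑ j ∈ Finset.range i, D * (ε * (1 + D) ^ j * S)
            = (ε * S * D) * ∑ j ∈ Finset.range i, (1 + D) ^ j := by
              rw [Finset.mul_sum]; exact Finset.sum_congr rfl fun j _ => by ring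
          _ = ε * S * ((1 + D) ^ i - 1) := by
              rw [← hg]; ring
      rw [hsum] at step
      nlinarith [step]
  -- sum the estimates
  have hSle : S ≤ (m + 1) * (ε * (1 + D) ^ m * S) := by
    calc S = ∑ j ∈ Finset.range (m + 1), a j := rfl
      _ ≤ ∑ j ∈ Finset.range (m + 1), ε * (1 + D) ^ m * S := by
          refine Finset.sum_le_sum fun j hj => ?_
          have hjm : j ≤ m := Nat.lt_succ_iff.1 (Finset.mem_range.1 hj)
          refine le_trans (key j hjm) ?_
          have : (1 + D) ^ j ≤ (1 + D) ^ m :=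
            pow_le_pow_right₀ (by linarith) hjm
          exact mul_le_mul_of_nonneg_right
            (mul_le_mul_of_nonneg_left this hεpos.le) hSnn
      _ = (m + 1) * (ε * (1 + D) ^ m * S) := by
          rw [Finset.sum_const, Finset.card_range]; push_cast; ring
  have hεle : ε ≤ 1 / (2 * (m + 1) * (1 + D) ^ m) := min_le_right _ _
  have hm1 : (0:ℝ) < (m:ℝ) + 1 := by positivity
  have hS0 : S = 0 := by
    by_contra hne
    have hSpos : 0 < S := lt_of_le_of_ne hSnn (Ne.symm hne)
    have : (m + 1) * (ε * (1 + D) ^ m * S) ≤ (1/2) * S := by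
      have : (m + 1 : ℝ) * (ε * (1 + D) ^ m) ≤ 1/2 := by
        have h := (le_div_iff₀ (by positivity : (0:ℝ) < 2 * (m + 1) * (1 + D) ^ m)).1 hεle
        nlinarith
      nlinarith
    linarith
  intro i hi
  have hle : a i ≤ S :=
    Finset.single_le_sum (fun j hj => ha j (Nat.lt_succ_iff.1 (Finset.mem_range.1 hj)))
      (Finset.mem_range.2 (Nat.lt_succ_of_le hi))
  have := ha i hi
  linarith [hS0 ▸ hle]
end

section
/- Let n, n₁, n₂ be nonnegative integers with n₁ + n₂ > n. For any complex numbers a, a′ there exist real numbers C > 0, ε > 0 and r > 1 such that the following holds: for every complex polynomial f of degree ≤ n and every z₀ ∈ ℂ with 0 ≤ Re z₀ < 1 and y₀ := Im z₀ > r, if |f^{(k)}(z₀) − δ_{k,0}·a| ≤ ε·A(f,z₀)/y₀^k for all 0 ≤ k < n₁, and |f̄^{(k)}(z₀) − δ_{k,0}·a′| ≤ ε·A(f,z₀)/y₀^k for all 0 ≤ k < n₂, then A(f,z₀) ≤ C. Here δ_{k,0} equals 1 if k = 0 and 0 otherwise. -/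
open Polynomial

/-- `A f z₀ = ∑_{k ≥ 0} |f⁽ᵏ⁾(0)| · (Im z₀)^k` for a complex polynomial `f`
(the sum is finite: only `k ≤ deg f` contribute). -/
noncomputable def polyNormA (f : Polynomial ℂ) (z₀ : ℂ) : ℝ :=
  ∑ k ∈ Finset.range (f.natDegree + 1),
    ‖((Polynomial.derivative^[k] f).eval 0)‖ * z₀.im ^ k

/-- Auxiliary coefficient `w^(k-m)/(k-m)!` (or `0` if `k < m`). -/
noncomputable def lcf (m k : ℕ) (w : ℂ) : ℂ :=
  if m ≤ k then w ^ (k - m) / (Nat.factorial (k - m) : ℂ) else 0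

lemma eval0_iter (p : Polynomial ℂ) (k : ℕ) :
    (derivative^[k] p).eval 0 = p.coeff k * (k.factorial : ℂ) := by
  rw [← coeff_zero_eq_eval_zero, coeff_iterate_derivative]
  simp [Nat.descFactorial_self, mul_comm]

lemma key_expand {n : ℕ} {p : Polynomial ℂ} (hp : p.natDegree ≤ n) (m : ℕ) (w : ℂ) :
    (derivative^[m] p).eval w
      = ∑ k ∈ Finset.range (n + 1), lcf m k w * (derivative^[k] p).eval 0 := by
  conv_lhs => rw [p.as_sum_range' (n+1) (Nat.lt_succ_of_le hp)]
  simp only [← C_mul_X_pow_eq_monomial, iterate_derivative_sum, iterate_derivative_C_mul,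
    iterate_derivative_X_pow_eq_C_mul, eval_finset_sum, eval_mul, eval_C, eval_pow, eval_X,
    eval0_iter]
  refine Finset.sum_congr rfl fun d _ => ?_
  unfold lcf
  split_ifs with h
  · have hfac : ((Nat.factorial (d - m) : ℂ)) ≠ 0 := by exact_mod_cast Nat.factorial_ne_zero _
    have hid : (Nat.factorial (d - m) : ℂ) * (d.descFactorial m : ℂ) = (d.factorial : ℂ) := by
      exact_mod_cast congrArg (Nat.cast : ℕ → ℂ) (Nat.factorial_mul_descFactorial h)
    field_simp
    rw [← hid]
    ring
  · push_neg at h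
    rw [Nat.descFactorial_eq_zero_iff_lt.mpr h]
    ring

/-- The linear map sending the weighted-derivative vector `b` to the vector of
scaled derivatives at `w` (first component) and conjugated data (second). -/
noncomputable def Tlin (n n₁ n₂ : ℕ) (w : ℂ) :
    (Fin (n+1) → ℂ) →ₗ[ℝ] (Fin n₁ → ℂ) × (Fin n₂ → ℂ) where
  toFun b := (fun m => ∑ k : Fin (n+1), lcf m.1 k.1 w * b k,
              fun m => ∑ k : Fin (n+1), lcf m.1 k.1 w * (starRingEnd ℂ) (b k))
  map_add' b c := by
    ext m <;> simp [mul_add, Finset.sum_add_distrib]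
  map_smul' r b := by
    ext m <;> simp [Complex.real_smul, Finset.mul_sum] <;>
      exact Finset.sum_congr rfl fun k _ => by ring

lemma eval0_iterate_derivative_map (p : Polynomial ℂ) (k : ℕ) :
    (derivative^[k] (p.map (starRingEnd ℂ))).eval 0
      = (starRingEnd ℂ) ((derivative^[k] p).eval 0) := by
  rw [iterate_derivative_map, ← coeff_zero_eq_eval_zero, ← coeff_zero_eq_eval_zero, coeff_map]

lemma Tlin_inj (n n₁ n₂ : ℕ) (hn : n < n₁ + n₂) :
    LinearMap.ker (Tlin n n₁ n₂ Complex.I) = ⊥ := by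
  rw [LinearMap.ker_eq_bot']
  intro b hb
  by_contra hb0
  set g : Polynomial ℂ :=
    ∑ k : Fin (n+1), Polynomial.C (b k / (Nat.factorial k.1 : ℂ)) * Polynomial.X ^ k.1 with hg
  have hgdeg : g.natDegree ≤ n := by
    refine natDegree_sum_le_of_forall_le _ _ fun k _ => ?_
    exact le_trans (natDegree_C_mul_X_pow_le _ _) (Nat.lt_succ_iff.mp k.2)
  have hgcoeff : ∀ k : Fin (n+1), g.coeff k.1 = b k / (Nat.factorial k.1 : ℂ) := by
    intro k
    rw [hg, finset_sum_coeff]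
    rw [Finset.sum_eq_single k]
    · simp
    · intro d _ hdk
      have : d.1 ≠ k.1 := fun h => hdk (Fin.ext h)
      simp [coeff_C_mul, coeff_X_pow, if_neg (Ne.symm this)]
    · simp
  have hgeval : ∀ k : Fin (n+1), (derivative^[k.1] g).eval 0 = b k := by
    intro k
    rw [eval0_iter, hgcoeff k]
    have : ((Nat.factorial k.1 : ℂ)) ≠ 0 := by exact_mod_cast Nat.factorial_ne_zero _
    field_simp
  have hg0 : g ≠ 0 := by
    intro h
    apply hb0
    funext k
    have := hgeval k
    rw [h] at this
    simpa using this.symm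
  have hroot1 : ∀ m < n₁, (derivative^[m] g).eval Complex.I = 0 := by
    intro m hm
    rw [key_expand hgdeg m Complex.I, ← Fin.sum_univ_eq_sum_range
      (fun k => lcf m k Complex.I * (derivative^[k] g).eval 0) (n+1)]
    have h1 := congrArg (fun v => v.1 ⟨m, hm⟩) hb
    simpa [Tlin, hgeval] using h1
  have hroot2 : ∀ m < n₂, (derivative^[m] (g.map (starRingEnd ℂ))).eval Complex.I = 0 := by
    intro m hm
    have hdeg' : (g.map (starRingEnd ℂ)).natDegree ≤ n := le_trans natDegree_map_le hgdeg
    rw [key_expand hdeg' m Complex.I, ← Fin.sum_univ_eq_sum_range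
      (fun k => lcf m k Complex.I * (derivative^[k] (g.map (starRingEnd ℂ))).eval 0) (n+1)]
    have h2 := congrArg (fun v => v.2 ⟨m, hm⟩) hb
    simp only [eval0_iterate_derivative_map, hgeval]
    simpa [Tlin] using h2
  have hdvd1 : (X - C Complex.I) ^ n₁ ∣ g := by
    rcases Nat.eq_zero_or_pos n₁ with h0 | hpos
    · simp [h0]
    · have hlt : n₁ - 1 < g.rootMultiplicity Complex.I := by
        apply lt_rootMultiplicity_of_isRoot_iterate_derivative_of_mem_nonZeroDivisors' hg0
        · intro m hm
          exact hroot1 m (by omega)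
        · intro m _ hm0
          exact mem_nonZeroDivisors_of_ne_zero (by exact_mod_cast hm0)
      exact dvd_trans (pow_dvd_pow _ (by omega)) (g.pow_rootMultiplicity_dvd Complex.I)
  have hdvd2 : (X - C (-Complex.I)) ^ n₂ ∣ g := by
    rcases Nat.eq_zero_or_pos n₂ with h0 | hpos
    · simp [h0]
    · set h : Polynomial ℂ := g.map (starRingEnd ℂ) with hh
      have hh0 : h ≠ 0 := by
        intro hc
        apply hg0
        have := congrArg (fun q => q.map (starRingEnd ℂ)) hc
        simpa [hh, Polynomial.map_map, RingHom.comp_assoc] using this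
      have hlt : n₂ - 1 < h.rootMultiplicity Complex.I := by
        apply lt_rootMultiplicity_of_isRoot_iterate_derivative_of_mem_nonZeroDivisors' hh0
        · intro m hm
          exact hroot2 m (by omega)
        · intro m _ hm0
          exact mem_nonZeroDivisors_of_ne_zero (by exact_mod_cast hm0)
      have hdvdh : (X - C Complex.I) ^ n₂ ∣ h :=
        dvd_trans (pow_dvd_pow _ (by omega)) (h.pow_rootMultiplicity_dvd Complex.I)
      have := Polynomial.map_dvd (starRingEnd ℂ) hdvdh
      simpa [hh, Polynomial.map_map, Polynomial.map_pow, Polynomial.map_sub, map_C,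
        Complex.conj_I] using this
  have hcop : IsCoprime ((X - C Complex.I) ^ n₁) ((X - C (-Complex.I)) ^ n₂) := by
    apply IsCoprime.pow
    apply Polynomial.isCoprime_X_sub_C_of_isUnit_sub
    have : Complex.I - -Complex.I = 2 * Complex.I := by ring
    rw [this]
    exact (by simp [Complex.I_ne_zero] : (2 * Complex.I : ℂ) ≠ 0).isUnit
  have hdvd : (X - C Complex.I) ^ n₁ * (X - C (-Complex.I)) ^ n₂ ∣ g := hcop.mul_dvd hdvd1 hdvd2
  have hdegdvd := Polynomial.natDegree_le_of_dvd hdvd hg0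
  have hdegprod : ((X - C Complex.I) ^ n₁ * (X - C (-Complex.I)) ^ n₂).natDegree = n₁ + n₂ := by
    rw [Polynomial.natDegree_mul (pow_ne_zero _ (X_sub_C_ne_zero _))
      (pow_ne_zero _ (X_sub_C_ne_zero _)), Polynomial.natDegree_pow, Polynomial.natDegree_pow,
      natDegree_X_sub_C, natDegree_X_sub_C]
    ring
  rw [hdegprod] at hdegdvd
  omega

lemma Tlin_bound (n n₁ n₂ : ℕ) (hn : n < n₁ + n₂) :
    ∃ K : ℝ, 0 < K ∧ ∀ b : Fin (n+1) → ℂ,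
      ‖b‖ ≤ K * ‖Tlin n n₁ n₂ Complex.I b‖ := by
  obtain ⟨S, hS⟩ := (Tlin n n₁ n₂ Complex.I).exists_leftInverse_of_injective
    (Tlin_inj n n₁ n₂ hn)
  set S' := LinearMap.toContinuousLinearMap S with hS'
  refine ⟨‖S'‖ + 1, by positivity, fun b => ?_⟩
  have hb : S (Tlin n n₁ n₂ Complex.I b) = b := LinearMap.congr_fun hS b
  calc ‖b‖ = ‖S' (Tlin n n₁ n₂ Complex.I b)‖ := by
        rw [hS']; simp [LinearMap.coe_toContinuousLinearMap', hb]
    _ ≤ ‖S'‖ * ‖Tlin n n₁ n₂ Complex.I b‖ := S'.le_opNorm _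
    _ ≤ (‖S'‖ + 1) * ‖Tlin n n₁ n₂ Complex.I b‖ := by
        have := norm_nonneg (Tlin n n₁ n₂ Complex.I b); nlinarith [norm_nonneg S']

lemma cabs_pow_sub_pow_le (u v : ℂ) (hu : ‖u‖ ≤ 2) (hv : ‖v‖ ≤ 2) (j : ℕ) :
    ‖u ^ j - v ^ j‖ ≤ (j : ℝ) * 2 ^ j * ‖u - v‖ := by
  induction j with
  | zero => simp
  | succ j ih =>
    have key : u ^ (j+1) - v ^ (j+1) = u * (u ^ j - v ^ j) + (u - v) * v ^ j := by ring
    have h1 : ‖u ^ (j+1) - v ^ (j+1)‖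
        ≤ ‖u‖ * ‖u ^ j - v ^ j‖
          + ‖u - v‖ * (‖v‖) ^ j := by
      rw [key]
      refine le_trans (norm_add_le _ _) ?_
      simp [map_mul, map_pow]
    have h2 : (‖v‖) ^ j ≤ 2 ^ j := pow_le_pow_left₀ (norm_nonneg v) hv j
    have h3 : (0:ℝ) ≤ ‖u - v‖ := norm_nonneg _
    have h4 : (0:ℝ) ≤ ‖u ^ j - v ^ j‖ := norm_nonneg _
    have h5 : (0:ℝ) < 2 ^ j := by positivity
    have t1 : ‖u‖ * ‖u ^ j - v ^ j‖
        ≤ 2 * ‖u ^ j - v ^ j‖ := mul_le_mul_of_nonneg_right hu h4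
    have t3 : ‖u - v‖ * (‖v‖ ^ j)
        ≤ ‖u - v‖ * 2 ^ j := mul_le_mul_of_nonneg_left h2 h3
    have h7 : (2:ℝ) ^ (j+1) = 2 ^ j * 2 := pow_succ 2 j
    push_cast
    nlinarith [mul_nonneg h3 h5.le, ih]

lemma lcf_diff (n m k : ℕ) (hk : k ≤ n) (u v : ℂ)
    (hu : ‖u‖ ≤ 2) (hv : ‖v‖ ≤ 2) :
    ‖lcf m k u - lcf m k v‖ ≤ (n : ℝ) * 2 ^ n * ‖u - v‖ := by
  have hd : (0:ℝ) ≤ ‖u - v‖ := norm_nonneg _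
  unfold lcf
  split_ifs with h
  · have hj : k - m ≤ n := le_trans (Nat.sub_le _ _) hk
    have hfac : (1:ℝ) ≤ (Nat.factorial (k - m) : ℝ) := by
      exact_mod_cast Nat.one_le_iff_ne_zero.mpr (Nat.factorial_ne_zero _)
    have habs : ‖u ^ (k-m) / (Nat.factorial (k-m) : ℂ)
          - v ^ (k-m) / (Nat.factorial (k-m) : ℂ)‖
        = ‖u ^ (k-m) - v ^ (k-m)‖ / (Nat.factorial (k-m) : ℝ) := by
      rw [div_sub_div_same, norm_div]
      norm_num
    rw [habs]
    have h1 := cabs_pow_sub_pow_le u v hu hv (k - m)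
    have h2 : ‖u ^ (k-m) - v ^ (k-m)‖ / (Nat.factorial (k-m) : ℝ)
        ≤ ‖u ^ (k-m) - v ^ (k-m)‖ := by
      apply div_le_self (norm_nonneg _) hfac
    refine le_trans h2 (le_trans h1 ?_)
    have c1 : ((k - m : ℕ) : ℝ) ≤ (n : ℝ) := by exact_mod_cast hj
    have c2 : (2:ℝ) ^ (k - m) ≤ 2 ^ n := pow_le_pow_right₀ one_le_two hj
    have c4 : (0:ℝ) ≤ (2:ℝ) ^ (k-m) := by positivity
    apply mul_le_mul_of_nonneg_right _ hd
    exact mul_le_mul c1 c2 c4 (by positivity)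
  · simpa using by positivity

lemma lcf_scale (m k : ℕ) (z y : ℂ) (hy : y ≠ 0) :
    lcf m k (z / y) * y ^ k = y ^ m * lcf m k z := by
  unfold lcf
  split_ifs with h
  · have hk : (k - m) + m = k := Nat.sub_add_cancel h
    have hfac : ((Nat.factorial (k - m) : ℂ)) ≠ 0 := by
      exact_mod_cast Nat.factorial_ne_zero _
    field_simp
    rw [← hk, pow_add]
    simp only [Nat.add_sub_cancel]
    field_simp
    rw [div_pow, div_mul_cancel₀ _ (pow_ne_zero _ hy)]
  · simp

set_option maxHeartbeats 1000000 in
/-- Lemma 2.5: let `n, n₁, n₂` be nonnegative integers with `n₁ + n₂ > n`.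
For any `a, a' ∈ ℂ` there exist `C > 0`, `ε > 0`, `r > 1` such that for every
polynomial `f` of degree `≤ n` and every `z₀` with `0 ≤ Re z₀ < 1` and
`Im z₀ > r`, the conditions
`|f⁽ᵏ⁾(z₀) − δ_{k,0} a| ≤ ε A(f,z₀)/y₀^k` for `0 ≤ k < n₁` and
`|f̄⁽ᵏ⁾(z₀) − δ_{k,0} a'| ≤ ε A(f,z₀)/y₀^k` for `0 ≤ k < n₂`
imply `A(f,z₀) ≤ C`, where `f̄` is `f` with conjugated coefficients. -/
theorem lemma_2_5 (n n₁ n₂ : ℕ) (hn : n < n₁ + n₂) (a a' : ℂ) :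
    ∃ C ε r : ℝ, 0 < C ∧ 0 < ε ∧ 1 < r ∧
      ∀ (f : Polynomial ℂ) (z₀ : ℂ), f.natDegree ≤ n →
        0 ≤ z₀.re → z₀.re < 1 → r < z₀.im →
        (∀ k < n₁,
          ‖((Polynomial.derivative^[k] f).eval z₀ - if k = 0 then a else 0)‖
            ≤ ε * polyNormA f z₀ / z₀.im ^ k) →
        (∀ k < n₂,
          ‖((Polynomial.derivative^[k] (f.map (starRingEnd ℂ))).eval z₀ -
                if k = 0 then a' else 0)‖
            ≤ ε * polyNormA f z₀ / z₀.im ^ k) →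
        polyNormA f z₀ ≤ C := by
  obtain ⟨K, hK, hKb⟩ := Tlin_bound n n₁ n₂ hn
  set D : ℝ := (n:ℝ) * 2^n + 1 with hD
  have hD0 : (0:ℝ) < D := by positivity
  set ε : ℝ := 1 / (4 * ((n:ℝ)+1) * K) with hε
  have hε0 : (0:ℝ) < ε := by
    have h4 : (0:ℝ) < 4 * ((n:ℝ)+1) := by positivity
    exact div_pos one_pos (mul_pos h4 hK)
  set r : ℝ := max 2 (4 * ((n:ℝ)+1) * K * D) with hr
  have hr2 : (2:ℝ) ≤ r := le_max_left _ _
  have hr0 : (0:ℝ) < r := by linarith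
  have hrD : 4 * ((n:ℝ)+1) * K * D ≤ r := le_max_right _ _
  clear_value D
  set Ma : ℝ := ‖a‖ + ‖a'‖ with hMa
  have hMa0 : (0:ℝ) ≤ Ma := by positivity
  have hC0 : (0:ℝ) < 2*((n:ℝ)+1)*K*Ma + 1 := by
    have : (0:ℝ) ≤ 2*((n:ℝ)+1)*K*Ma :=
      mul_nonneg (mul_nonneg (by positivity) hK.le) hMa0
    linarith
  refine ⟨2*((n:ℝ)+1)*K*Ma + 1, ε, r, hC0, hε0, by linarith, ?_⟩
  intro f z₀ hdeg hx0 hx1 hy h₁ h₂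
  set y : ℝ := z₀.im with hyd
  have hy2 : (2:ℝ) < y := lt_of_le_of_lt hr2 hy
  have hy0 : (0:ℝ) < y := by linarith
  have hyC : ((y:ℝ):ℂ) ≠ 0 := by exact_mod_cast ne_of_gt hy0
  set w : ℂ := z₀ / ((y:ℝ):ℂ) with hw
  set b : Fin (n+1) → ℂ := fun k => (derivative^[k.1] f).eval 0 * ((y:ℝ):ℂ)^k.1 with hb
  set A := polyNormA f z₀ with hA
  -- A as a finite sum over Fin (n+1)
  have hAsum : A = ∑ k : Fin (n+1), ‖b k‖ := by
    have h1 : A = ∑ k ∈ Finset.range (n+1),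
        ‖(derivative^[k] f).eval 0‖ * y^k := by
      rw [hA, polyNormA]
      apply Finset.sum_subset
      · intro x hx
        simp only [Finset.mem_range] at hx ⊢
        omega
      · intro x _ hx'
        simp only [Finset.mem_range, not_lt] at hx'
        rw [iterate_derivative_eq_zero (by omega)]
        simp
    rw [h1, ← Fin.sum_univ_eq_sum_range
      (fun k => ‖(derivative^[k] f).eval 0‖ * y^k) (n+1)]
    refine Finset.sum_congr rfl fun k _ => ?_
    rw [hb]
    simp only [norm_mul, norm_pow, Complex.norm_real, Real.norm_eq_abs, abs_of_pos hy0]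
  have hA0 : (0:ℝ) ≤ A := by
    rw [hAsum]
    exact Finset.sum_nonneg fun k _ => norm_nonneg _
  -- geometry of w
  have hwI : w - Complex.I = ((z₀.re / y : ℝ) : ℂ) := by
    have hz : z₀ - Complex.I * ((y:ℝ):ℂ) = ((z₀.re : ℝ) : ℂ) := by
      simp [Complex.ext_iff, hyd]
    rw [hw, Complex.ofReal_div, eq_div_iff hyC, sub_mul, div_mul_cancel₀ _ hyC]
    exact hz
  have hwIabs : ‖w - Complex.I‖ ≤ 1 / y := by
    rw [hwI, Complex.norm_real, Real.norm_eq_abs, abs_of_nonneg (div_nonneg hx0 hy0.le)]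
    gcongr

  have hwIr : ‖w - Complex.I‖ ≤ 1 / r :=
    le_trans hwIabs (by gcongr)
  have hw2 : ‖w‖ ≤ 2 := by
    have h1 : ‖w‖ ≤ ‖w - Complex.I‖ + ‖Complex.I‖ := by
      simpa using norm_add_le (w - Complex.I) Complex.I
    rw [Complex.norm_I] at h1
    have h2 : 1/y ≤ 1 := by rw [div_le_one hy0]; linarith
    linarith [hwIabs]
  have hI2 : ‖Complex.I‖ ≤ 2 := by rw [Complex.norm_I]; norm_num
  -- component identities at w
  have hc1 : ∀ m : ℕ, (∑ k : Fin (n+1), lcf m k.1 w * b k)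
      = ((y:ℝ):ℂ)^m * (derivative^[m] f).eval z₀ := by
    intro m
    rw [key_expand hdeg m z₀, Finset.mul_sum, ← Fin.sum_univ_eq_sum_range
      (fun k => ((y:ℝ):ℂ)^m * (lcf m k z₀ * (derivative^[k] f).eval 0)) (n+1)]
    refine Finset.sum_congr rfl fun k _ => ?_
    have hs := lcf_scale m k.1 z₀ ((y:ℝ):ℂ) hyC
    rw [hb, hw]
    calc lcf m k.1 (z₀ / ((y:ℝ):ℂ)) * ((derivative^[k.1] f).eval 0 * ((y:ℝ):ℂ)^k.1)
        = (lcf m k.1 (z₀ / ((y:ℝ):ℂ)) * ((y:ℝ):ℂ)^k.1) * (derivative^[k.1] f).eval 0 := by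
          ring
      _ = (((y:ℝ):ℂ)^m * lcf m k.1 z₀) * (derivative^[k.1] f).eval 0 := by rw [hs]
      _ = ((y:ℝ):ℂ)^m * (lcf m k.1 z₀ * (derivative^[k.1] f).eval 0) := by ring
  have hc2 : ∀ m : ℕ, (∑ k : Fin (n+1), lcf m k.1 w * (starRingEnd ℂ) (b k))
      = ((y:ℝ):ℂ)^m * (derivative^[m] (f.map (starRingEnd ℂ))).eval z₀ := by
    intro m
    have hdeg' : (f.map (starRingEnd ℂ)).natDegree ≤ n := le_trans natDegree_map_le hdeg
    rw [key_expand hdeg' m z₀, Finset.mul_sum, ← Fin.sum_univ_eq_sum_range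
      (fun k => ((y:ℝ):ℂ)^m *
        (lcf m k z₀ * (derivative^[k] (f.map (starRingEnd ℂ))).eval 0)) (n+1)]
    refine Finset.sum_congr rfl fun k _ => ?_
    have hs := lcf_scale m k.1 z₀ ((y:ℝ):ℂ) hyC
    have hconj : (starRingEnd ℂ) (b k)
        = (derivative^[k.1] (f.map (starRingEnd ℂ))).eval 0 * ((y:ℝ):ℂ)^k.1 := by
      rw [hb, eval0_iterate_derivative_map]
      simp [map_mul, map_pow, Complex.conj_ofReal]
    rw [hconj, hw]
    calc lcf m k.1 (z₀ / ((y:ℝ):ℂ))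
          * ((derivative^[k.1] (f.map (starRingEnd ℂ))).eval 0 * ((y:ℝ):ℂ)^k.1)
        = (lcf m k.1 (z₀ / ((y:ℝ):ℂ)) * ((y:ℝ):ℂ)^k.1)
            * (derivative^[k.1] (f.map (starRingEnd ℂ))).eval 0 := by ring
      _ = (((y:ℝ):ℂ)^m * lcf m k.1 z₀)
            * (derivative^[k.1] (f.map (starRingEnd ℂ))).eval 0 := by rw [hs]
      _ = ((y:ℝ):ℂ)^m
            * (lcf m k.1 z₀ * (derivative^[k.1] (f.map (starRingEnd ℂ))).eval 0) := by ring
  -- entry bounds at w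
  have he1 : ∀ m : Fin n₁,
      ‖∑ k : Fin (n+1), lcf m.1 k.1 w * b k‖ ≤ ε * A + ‖a‖ := by
    intro m
    have h := h₁ m.1 m.2
    have hyp : (0:ℝ) < y ^ m.1 := by positivity
    set X := ∑ k : Fin (n+1), lcf m.1 k.1 w * b k with hX
    set δ : ℂ := if m.1 = 0 then a else 0 with hδ
    have hdel : X - δ = ((y:ℝ):ℂ)^m.1 * ((derivative^[m.1] f).eval z₀ - δ) := by
      rw [hX, hc1 m.1, hδ]
      rcases eq_or_ne m.1 0 with h0 | h0 <;> simp [h0] <;> ring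
    have habs : ‖X - δ‖
        = y^m.1 * ‖(derivative^[m.1] f).eval z₀ - δ‖ := by
      rw [hdel, norm_mul, norm_pow, Complex.norm_real, Real.norm_eq_abs, abs_of_pos hy0]
    have hXle : ‖X‖ ≤ ‖X - δ‖ + ‖δ‖ := by
      have := norm_add_le (X - δ) δ
      simpa using this
    have hδa : ‖δ‖ ≤ ‖a‖ := by
      rw [hδ]; rcases eq_or_ne m.1 0 with h0 | h0 <;> simp [h0]
    have hmain : ‖X - δ‖ ≤ ε * A := by
      rw [habs]
      calc y^m.1 * ‖(derivative^[m.1] f).eval z₀ - δ‖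
          ≤ y^m.1 * (ε * A / y^m.1) := mul_le_mul_of_nonneg_left h hyp.le
        _ = ε * A := by field_simp
    linarith
  have he2 : ∀ m : Fin n₂,
      ‖∑ k : Fin (n+1), lcf m.1 k.1 w * (starRingEnd ℂ) (b k)‖
        ≤ ε * A + ‖a'‖ := by
    intro m
    have h := h₂ m.1 m.2
    have hyp : (0:ℝ) < y ^ m.1 := by positivity
    set X := ∑ k : Fin (n+1), lcf m.1 k.1 w * (starRingEnd ℂ) (b k) with hX
    set δ : ℂ := if m.1 = 0 then a' else 0 with hδ
    have hdel : X - δ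
        = ((y:ℝ):ℂ)^m.1 * ((derivative^[m.1] (f.map (starRingEnd ℂ))).eval z₀ - δ) := by
      rw [hX, hc2 m.1, hδ]
      rcases eq_or_ne m.1 0 with h0 | h0 <;> simp [h0] <;> ring
    have habs : ‖X - δ‖
        = y^m.1 * ‖(derivative^[m.1] (f.map (starRingEnd ℂ))).eval z₀ - δ‖ := by
      rw [hdel, norm_mul, norm_pow, Complex.norm_real, Real.norm_eq_abs, abs_of_pos hy0]
    have hXle : ‖X‖ ≤ ‖X - δ‖ + ‖δ‖ := by
      have := norm_add_le (X - δ) δ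
      simpa using this
    have hδa : ‖δ‖ ≤ ‖a'‖ := by
      rw [hδ]; rcases eq_or_ne m.1 0 with h0 | h0 <;> simp [h0]
    have hmain : ‖X - δ‖ ≤ ε * A := by
      rw [habs]
      calc y^m.1 * ‖(derivative^[m.1] (f.map (starRingEnd ℂ))).eval z₀ - δ‖
          ≤ y^m.1 * (ε * A / y^m.1) := mul_le_mul_of_nonneg_left h hyp.le
        _ = ε * A := by field_simp
    linarith
  -- perturbation from w to I
  have hd : ∀ (m : ℕ) (c : Fin (n+1) → ℂ),
      ‖(∑ k : Fin (n+1), lcf m k.1 Complex.I * c k)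
        - ∑ k : Fin (n+1), lcf m k.1 w * c k‖
      ≤ (n:ℝ) * 2^n * (1/r) * ∑ k : Fin (n+1), ‖c k‖ := by
    intro m c
    rw [← Finset.sum_sub_distrib]
    refine le_trans (norm_sum_le _ _) ?_
    rw [Finset.mul_sum]
    refine Finset.sum_le_sum fun k _ => ?_
    have hrw : lcf m k.1 Complex.I * c k - lcf m k.1 w * c k
        = (lcf m k.1 Complex.I - lcf m k.1 w) * c k := by ring
    rw [hrw, norm_mul]
    have h2 := lcf_diff n m k.1 (Nat.lt_succ_iff.mp k.2) Complex.I w hI2 hw2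
    have h3 : ‖Complex.I - w‖ ≤ 1/r := by
      rw [norm_sub_rev]
      exact hwIr
    have h4 : ‖lcf m k.1 Complex.I - lcf m k.1 w‖ ≤ (n:ℝ)*2^n*(1/r) := by
      refine le_trans h2 ?_
      exact mul_le_mul_of_nonneg_left h3 (by positivity)
    exact mul_le_mul_of_nonneg_right h4 (norm_nonneg _)
  -- norm bound for T at I
  set B : ℝ := ε*A + Ma + (n:ℝ)*2^n*(1/r)*A with hB
  have hB0 : (0:ℝ) ≤ B := by
    have h1 : (0:ℝ) ≤ ε*A := mul_nonneg hε0.le hA0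
    have h2 : (0:ℝ) ≤ (n:ℝ)*2^n*(1/r)*A :=
      mul_nonneg (by positivity) hA0
    rw [hB]; linarith
  have hTnorm : ‖(Tlin n n₁ n₂ Complex.I) b‖ ≤ B := by
    rw [Prod.norm_def]
    apply max_le
    · rw [pi_norm_le_iff_of_nonneg hB0]
      intro m
      have hsplit : (∑ k : Fin (n+1), lcf m.1 k.1 Complex.I * b k)
          = (∑ k : Fin (n+1), lcf m.1 k.1 w * b k)
            + ((∑ k : Fin (n+1), lcf m.1 k.1 Complex.I * b k)
              - ∑ k : Fin (n+1), lcf m.1 k.1 w * b k) := by ring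
      have : ‖∑ k : Fin (n+1), lcf m.1 k.1 Complex.I * b k‖
          ≤ (ε*A + ‖a‖) + (n:ℝ)*2^n*(1/r)*A := by
        rw [hsplit]
        refine le_trans (norm_add_le _ _) ?_
        have := hd m.1 b
        rw [← hAsum] at this
        exact add_le_add (he1 m) this
      refine le_trans this ?_
      rw [hB, hMa]
      have := norm_nonneg a'
      show (ε*A + ‖a‖) + (n:ℝ)*2^n*(1/r)*A
        ≤ ε*A + (‖a‖ + ‖a'‖) + (n:ℝ)*2^n*(1/r)*A
      linarith
    · rw [pi_norm_le_iff_of_nonneg hB0]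
      intro m
      have hsplit : (∑ k : Fin (n+1), lcf m.1 k.1 Complex.I * (starRingEnd ℂ) (b k))
          = (∑ k : Fin (n+1), lcf m.1 k.1 w * (starRingEnd ℂ) (b k))
            + ((∑ k : Fin (n+1), lcf m.1 k.1 Complex.I * (starRingEnd ℂ) (b k))
              - ∑ k : Fin (n+1), lcf m.1 k.1 w * (starRingEnd ℂ) (b k)) := by ring
      have hconjsum : (∑ k : Fin (n+1), ‖(starRingEnd ℂ) (b k)‖) = A := by
        rw [hAsum]
        exact Finset.sum_congr rfl fun k _ => Complex.norm_conj _
      have : ‖∑ k : Fin (n+1), lcf m.1 k.1 Complex.I * (starRingEnd ℂ) (b k)‖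
          ≤ (ε*A + ‖a'‖) + (n:ℝ)*2^n*(1/r)*A := by
        rw [hsplit]
        refine le_trans (norm_add_le _ _) ?_
        have := hd m.1 (fun k => (starRingEnd ℂ) (b k))
        rw [hconjsum] at this
        exact add_le_add (he2 m) this
      refine le_trans this ?_
      rw [hB, hMa]
      have := norm_nonneg a
      show (ε*A + ‖a'‖) + (n:ℝ)*2^n*(1/r)*A
        ≤ ε*A + (‖a‖ + ‖a'‖) + (n:ℝ)*2^n*(1/r)*A
      linarith
  -- put everything together
  have hAb : A ≤ ((n:ℝ)+1) * ‖b‖ := by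
    rw [hAsum]
    have hle : ∀ k : Fin (n+1), ‖b k‖ ≤ ‖b‖ := fun k => by
      exact norm_le_pi_norm b k
    calc (∑ k : Fin (n+1), ‖b k‖) ≤ ∑ _k : Fin (n+1), ‖b‖ :=
          Finset.sum_le_sum fun k _ => hle k
      _ = ((n:ℝ)+1) * ‖b‖ := by
          rw [Finset.sum_const, Finset.card_univ, Fintype.card_fin, nsmul_eq_mul]
          push_cast
          ring
  have hchain : A ≤ ((n:ℝ)+1) * K * B := by
    calc A ≤ ((n:ℝ)+1) * ‖b‖ := hAb
      _ ≤ ((n:ℝ)+1) * (K * ‖(Tlin n n₁ n₂ Complex.I) b‖) :=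
          mul_le_mul_of_nonneg_left (hKb b) (by positivity)
      _ ≤ ((n:ℝ)+1) * (K * B) :=
          mul_le_mul_of_nonneg_left (mul_le_mul_of_nonneg_left hTnorm hK.le) (by positivity)
      _ = ((n:ℝ)+1) * K * B := by ring
  have e1 : ((n:ℝ)+1)*K*ε = 1/4 := by
    rw [hε]
    field_simp
  have e2 : ((n:ℝ)+1)*K*((n:ℝ)*2^n*(1/r)) ≤ 1/4 := by
    have h1 : ((n:ℝ)+1)*K*((n:ℝ)*2^n*(1/r)) ≤ ((n:ℝ)+1)*K*(D*(1/r)) := by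
      have : (n:ℝ)*2^n*(1/r) ≤ D*(1/r) := by
        apply mul_le_mul_of_nonneg_right _ (by positivity)
        rw [hD]; linarith
      exact mul_le_mul_of_nonneg_left this (by positivity)
    have h2 : ((n:ℝ)+1)*K*(D*(1/r)) ≤ 1/4 := by
      rw [show ((n:ℝ)+1)*K*(D*(1/r)) = (((n:ℝ)+1)*K*D)/r by ring, div_le_iff₀ hr0]
      linarith only [hrD]
    linarith
  have hexp : ((n:ℝ)+1)*K*B
      = (((n:ℝ)+1)*K*ε)*A + ((n:ℝ)+1)*K*Ma + (((n:ℝ)+1)*K*((n:ℝ)*2^n*(1/r)))*A := by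
    rw [hB]; ring
  have hq : (((n:ℝ)+1)*K*((n:ℝ)*2^n*(1/r)))*A ≤ (1/4)*A :=
    mul_le_mul_of_nonneg_right e2 hA0
  rw [hexp, e1] at hchain
  linarith
end

section
/- Fix any real number r₀ and let S ⊂ ℂ × ℂ × ℂ be the set S := { (c·z + b, c, exp(2πi·z)) : c, b Gaussian integers, z ∈ ℂ with Im z > r₀ }. Then for every complex number γ and every nonzero integer a, the point (γ, a, 0) belongs to the topological closure of S in ℂ³. In particular, S is not closed in ℂ³. -/
open Complex Filter

/-- Example 2 (Section 1.10): with
`S = { (c·z + b, c, exp(2πi z)) : c, b Gaussian integers, Im z > r₀ } ⊆ ℂ³`,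
every point `(γ, a, 0)` with `γ ∈ ℂ` and `a` a nonzero integer lies in the
closure of `S`; in particular `S` is not closed in `ℂ³`. -/
theorem example_2_not_closed (r₀ : ℝ)
    (S : Set (ℂ × ℂ × ℂ))
    (hS : S = {p : ℂ × ℂ × ℂ | ∃ c b : GaussianInt, ∃ z : ℂ, r₀ < z.im ∧
      p = (GaussianInt.toComplex c * z + GaussianInt.toComplex b,
           GaussianInt.toComplex c,
           Complex.exp (2 * Real.pi * Complex.I * z))}) :
    (∀ (γ : ℂ) (a : ℤ), a ≠ 0 → ((γ, ((a : ℂ), (0 : ℂ))) : ℂ × ℂ × ℂ) ∈ closure S) ∧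
      ¬ IsClosed S := by
  have hclos : ∀ (γ : ℂ) (a : ℤ), a ≠ 0 →
      ((γ, ((a : ℂ), (0 : ℂ))) : ℂ × ℂ × ℂ) ∈ closure S := by
    intro γ a ha
    have haC : (a : ℂ) ≠ 0 := by exact_mod_cast ha
    -- the sequence z n = γ/a + n * a^2 * I
    set z : ℕ → ℂ := fun n => γ / a + (n : ℂ) * (a : ℂ) ^ 2 * I with hz
    set f : ℕ → ℂ × ℂ × ℂ :=
      fun n => (γ, ((a : ℂ), Complex.exp (2 * Real.pi * Complex.I * z n))) with hf
    -- imaginary part of z n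
    have him : ∀ n : ℕ, (z n).im = (γ / a).im + n * (a : ℝ) ^ 2 := by
      intro n
      have hzn : z n = γ / a + ((n * (a : ℝ) ^ 2 : ℝ) : ℂ) * I := by
        rw [hz]; push_cast; ring
      rw [hzn, Complex.add_im, Complex.mul_I_im, Complex.ofReal_re]
    have ha2 : (1 : ℝ) ≤ (a : ℝ) ^ 2 := by
      have h1 : (1 : ℤ) ≤ a ^ 2 := by
        rcases lt_or_gt_of_ne ha with h | h <;> nlinarith
      exact_mod_cast h1
    -- imaginary parts tend to infinity
    have htop : Tendsto (fun n : ℕ => (z n).im) atTop atTop := by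
      simp only [him]
      apply tendsto_atTop_add_const_left
      apply Tendsto.atTop_mul_const (by linarith : (0:ℝ) < (a:ℝ)^2)
      exact tendsto_natCast_atTop_atTop
    -- eventually in S
    have hmem : ∀ᶠ n in atTop, f n ∈ S := by
      filter_upwards [htop.eventually_gt_atTop r₀] with n hn
      rw [hS]
      refine ⟨(a : GaussianInt), -⟨0, n * a ^ 3⟩, z n, hn, ?_⟩
      have h1 : (GaussianInt.toComplex (a : GaussianInt)) = (a : ℂ) := by simp
      have h2 : GaussianInt.toComplex (-(⟨0, n * a ^ 3⟩ : GaussianInt))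
          = -((n : ℂ) * (a : ℂ) ^ 3 * I) := by
        rw [map_neg, GaussianInt.toComplex_def']
        push_cast
        ring
      have heq1 : (a : ℂ) * z n + -((n : ℂ) * (a : ℂ) ^ 3 * I) = γ := by
        rw [hz]
        field_simp
        ring
      rw [hf, h1, h2, heq1]
    -- the third coordinate tends to 0
    have hexp : Tendsto (fun n => Complex.exp (2 * Real.pi * Complex.I * z n))
        atTop (nhds 0) := by
      have hnorm : ∀ n : ℕ, ‖Complex.exp (2 * Real.pi * Complex.I * z n)‖
          = Real.exp (-(2 * Real.pi) * (z n).im) := by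
        intro n
        rw [Complex.norm_exp]
        congr 1
        simp [Complex.mul_re, Complex.mul_im]
      rw [tendsto_zero_iff_norm_tendsto_zero]
      simp only [hnorm]
      have hb : Tendsto (fun n : ℕ => -(2 * Real.pi) * (z n).im) atTop atBot := by
        refine (tendsto_const_mul_atBot_of_neg ?_).2 htop
        nlinarith [Real.pi_pos]
      exact Real.tendsto_exp_atBot.comp hb
    have htend : Tendsto f atTop (nhds (γ, ((a : ℂ), (0 : ℂ)))) := by
      rw [hf]
      exact tendsto_const_nhds.prodMk_nhds (tendsto_const_nhds.prodMk_nhds hexp)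
    exact mem_closure_of_tendsto htend hmem
  refine ⟨hclos, fun hcl => ?_⟩
  -- (0, 1, 0) is in the closure but not in S
  have h := hclos 0 1 one_ne_zero
  rw [hcl.closure_eq, hS] at h
  obtain ⟨c, b, w, hw, heq⟩ := h
  have : Complex.exp (2 * Real.pi * Complex.I * w) = 0 := by
    have := congrArg (fun p : ℂ × ℂ × ℂ => p.2.2) heq
    simpa using this.symm
  exact Complex.exp_ne_zero _ this
end
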